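/- Let 0 < δ and 2δ ≤ ε. Let c : ℝ → ℝ be positive on [0, ε] and satisfy c(t) ≥ c(t + ε − δ) for all t ∈ [0, δ]. Let r : ℝ → ℝ satisfy 0 ≤ r(t) ≤ c(t) on [0, ε], and let β ∈ [0, 1]. Assume t ↦ r(t)/c(t) is interval integrable on [0, ε] and t ↦ r(t + ε − δ)/c(t) is interval integrable on [0, δ]. Then ∫₀^ε r(t)/c(t) dt ≥ ∫₀^δ (r(t) + β·r(t + ε − δ))/c(t) dt + ∫_δ^{ε−δ} r(t)/c(t) dt + (1 − β)·∫_{ε−δ}^ε r(t)/c(t) dt. -/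

import Mathlib

open MeasureTheory intervalIntegral

/-- Key swapping inequality (inequality (10)) for the threshold transmission schedule:
moving a fraction `β` of the data transmitted in the low-capacity region `[ε−δ, ε]`
to the high-capacity region `[0, δ]` does not increase the utilization cost. -/
theorem swapping_inequality (δ ε : ℝ) (c r : ℝ → ℝ) (β : ℝ)
    (hδ : 0 < δ) (hε : 2 * δ ≤ ε)
    (hc_pos : ∀ t ∈ Set.Icc (0 : ℝ) ε, 0 < c t)
    (hc_dec : ∀ t ∈ Set.Icc (0 : ℝ) δ, c t ≥ c (t + ε - δ))
    (hr_nonneg : ∀ t ∈ Set.Icc (0 : ℝ) ε, 0 ≤ r t)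
    (hr_le : ∀ t ∈ Set.Icc (0 : ℝ) ε, r t ≤ c t)
    (hβ : β ∈ Set.Icc (0 : ℝ) 1)
    (hint1 : IntervalIntegrable (fun t => r t / c t) volume 0 ε)
    (hint2 : IntervalIntegrable (fun t => r (t + ε - δ) / c t) volume 0 δ) :
    (∫ t in (0:ℝ)..ε, r t / c t) ≥
      (∫ t in (0:ℝ)..δ, (r t + β * r (t + ε - δ)) / c t)
        + (∫ t in δ..(ε - δ), r t / c t)
        + (1 - β) * ∫ t in (ε - δ)..ε, r t / c t := by
  have hδε : δ ≤ ε - δ := by linarith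
  have hεδ : ε - δ ≤ ε := by linarith
  have hδε' : (0:ℝ) ≤ δ := hδ.le
  have huIcc : Set.uIcc (0:ℝ) ε = Set.Icc 0 ε := Set.uIcc_of_le (by linarith)
  -- integrability on subintervals
  have hsub : ∀ a b : ℝ, 0 ≤ a → a ≤ b → b ≤ ε →
      IntervalIntegrable (fun t => r t / c t) volume a b := by
    intro a b ha hab hbε
    exact hint1.mono_set (by rw [huIcc, Set.uIcc_of_le hab]; exact Set.Icc_subset_Icc ha hbε)
  have h1 := hsub 0 δ le_rfl hδε' (by linarith)
  have h2 := hsub δ (ε - δ) hδε' hδε hεδ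
  have h3 := hsub (ε - δ) ε (by linarith) hεδ le_rfl
  -- integrability of shifted
  have hshift : IntervalIntegrable (fun t => r (t + ε - δ) / c (t + ε - δ)) volume 0 δ := by
    have := h3.comp_add_right (ε - δ)
    simpa [sub_sub_cancel, ← add_sub_assoc] using this
  -- split integral
  have hsplit : (∫ t in (0:ℝ)..ε, r t / c t) =
      (∫ t in (0:ℝ)..δ, r t / c t) + (∫ t in δ..(ε - δ), r t / c t)
        + (∫ t in (ε - δ)..ε, r t / c t) := by
    rw [integral_add_adjacent_intervals h1 h2, integral_add_adjacent_intervals (h1.trans h2) h3]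
  -- expand the LHS of the inequality's first integral
  have hexp : (∫ t in (0:ℝ)..δ, (r t + β * r (t + ε - δ)) / c t) =
      (∫ t in (0:ℝ)..δ, r t / c t) + β * ∫ t in (0:ℝ)..δ, r (t + ε - δ) / c t := by
    rw [← intervalIntegral.integral_const_mul, ← integral_add h1 (hint2.const_mul β)]
    congr 1; ext t; rw [add_div, mul_div_assoc]
  -- key comparison
  have hkey : (∫ t in (0:ℝ)..δ, r (t + ε - δ) / c t) ≤ ∫ t in (ε - δ)..ε, r t / c t := by
    have hsubst : (∫ t in (ε - δ)..ε, r t / c t)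
        = ∫ t in (0:ℝ)..δ, r (t + ε - δ) / c (t + ε - δ) := by
      have := integral_comp_add_right (a := (0:ℝ)) (b := δ) (fun t => r t / c t) (ε - δ)
      rw [show δ + (ε - δ) = ε by ring, zero_add] at this
      rw [← this]
      congr 1; ext t; rw [← add_sub_assoc]
    rw [hsubst]
    apply integral_mono_on hδε' hint2 hshift
    intro t ht
    have htε : t + ε - δ ∈ Set.Icc (0:ℝ) ε := ⟨by linarith [ht.1], by linarith [ht.2]⟩
    exact div_le_div_of_nonneg_left (hr_nonneg _ htε) (hc_pos _ htε) (hc_dec t ht)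
  have hB_nonneg : 0 ≤ ∫ t in (ε - δ)..ε, r t / c t := by
    apply integral_nonneg hεδ
    intro t ht
    have htε : t ∈ Set.Icc (0:ℝ) ε := ⟨by linarith [ht.1], ht.2⟩
    exact div_nonneg (hr_nonneg _ htε) (hc_pos _ htε).le
  rw [hsplit, hexp]
  nlinarith [hβ.1, hβ.2, mul_le_mul_of_nonneg_left hkey hβ.1]
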